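/- arXiv:2503.02586 — 3 statements merged into one kernel-verified Lean document; each statement's English description precedes it below -/
import Mathlib

section
/- Every 4-dimensional 𝔽_q-linear subspace of the space of 3×3 matrices over a finite field 𝔽_q contains a nonzero singular matrix. Consequently, any subspace of M₃(𝔽_q) all of whose nonzero elements are invertible has dimension at most 3. -/
open MvPolynomial Module

lemma key {F : Type*} [Field F] [Fintype F]
    (W : Submodule F (Matrix (Fin 3) (Fin 3) F)) (h4 : 4 ≤ Module.finrank F W) :
    ∃ M ∈ W, M ≠ 0 ∧ M.det = 0 := by
  classical
  have : FiniteDimensional F W := FiniteDimensional.finiteDimensional_submodule W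
  let b := Module.finBasis F W
  let v : Fin 4 → Matrix (Fin 3) (Fin 3) F := fun i => (b (Fin.castLE h4 i) : _)
  have hvW : ∀ i, v i ∈ W := fun i => (b (Fin.castLE h4 i)).2
  have hli : LinearIndependent F v := by
    have := (b.linearIndependent.comp (Fin.castLE h4) (Fin.castLE_injective h4))
    exact this.map' W.subtype W.ker_subtype
  -- the determinant polynomial
  let A : Matrix (Fin 3) (Fin 3) (MvPolynomial (Fin 4) F) :=
    fun i j => ∑ k : Fin 4, X k * C (v k i j)
  let P : MvPolynomial (Fin 4) F := A.det
  have hdeg : P.totalDegree < Fintype.card (Fin 4) := by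
    have hA : ∀ i j, (A i j).totalDegree ≤ 1 := by
      intro i j
      refine totalDegree_finsetSum_le fun k _ => ?_
      calc (X k * C (v k i j)).totalDegree ≤ (X (R := F) k).totalDegree
            + (C (σ := Fin 4) (v k i j)).totalDegree := totalDegree_mul _ _
        _ ≤ 1 := by simp [totalDegree_X, totalDegree_C]
    have : P.totalDegree ≤ 3 := by
      rw [show P = A.det from rfl, Matrix.det_apply']
      refine totalDegree_finsetSum_le fun σ _ => ?_
      refine le_trans (totalDegree_mul _ _) ?_
      have hsgn : (((Equiv.Perm.sign σ : ℤ) : MvPolynomial (Fin 4) F)).totalDegree = 0 := by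
        rcases Int.units_eq_one_or (Equiv.Perm.sign σ) with h | h <;> simp [h, totalDegree_neg]
      rw [hsgn, zero_add]
      calc (∏ i, A (σ i) i).totalDegree
          ≤ ∑ i, (A (σ i) i).totalDegree := totalDegree_finset_prod _ _
        _ ≤ ∑ _i : Fin 3, 1 := Finset.sum_le_sum fun i _ => hA _ _
        _ = 3 := by simp
    simpa using Nat.lt_of_le_of_lt this (by norm_num)
  have heval : ∀ x : Fin 4 → F, eval x P = (∑ k : Fin 4, x k • v k).det := by
    intro x
    rw [show P = A.det from rfl, RingHom.map_det]
    congr 1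
    ext i j
    change eval x (A i j) = _
    simp [A, Matrix.map_apply, Matrix.sum_apply, Matrix.smul_apply, smul_eq_mul]
  obtain ⟨p, hp⟩ := CharP.exists F
  haveI := hp
  haveI : Fact p.Prime := ⟨CharP.char_is_prime F p⟩
  have hdvd := char_dvd_card_solutions p hdeg
  have h0 : eval (0 : Fin 4 → F) P = 0 := by
    rw [heval]; simp
  have hcard : 1 < Fintype.card { x : Fin 4 → F // eval x P = 0 } := by
    have hpos : 0 < Fintype.card { x : Fin 4 → F // eval x P = 0 } :=
      Fintype.card_pos_iff.2 ⟨⟨0, h0⟩⟩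
    have := Nat.le_of_dvd hpos hdvd
    exact lt_of_lt_of_le (Fact.out (p := p.Prime)).one_lt this
  obtain ⟨⟨x, hx⟩, hxne⟩ := Fintype.exists_ne_of_one_lt_card hcard ⟨0, h0⟩
  have hxne0 : x ≠ 0 := fun h => hxne (by simp [h])
  refine ⟨∑ k, x k • v k, ?_, ?_, ?_⟩
  · exact Submodule.sum_mem _ fun k _ => Submodule.smul_mem _ _ (hvW k)
  · intro h
    exact hxne0 (funext fun k => (Fintype.linearIndependent_iff.1 hli x h) k)
  · rw [← heval]; exact hx

/-- Every 4-dimensional subspace of `M₃(𝔽_q)` contains a nonzero singular matrix;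
consequently a subspace all of whose nonzero elements are invertible has dimension
at most 3. -/
theorem stmt3 {F : Type*} [Field F] [Fintype F] :
    (∀ W : Submodule F (Matrix (Fin 3) (Fin 3) F), Module.finrank F W = 4 →
      ∃ M ∈ W, M ≠ 0 ∧ M.det = 0) ∧
    (∀ W : Submodule F (Matrix (Fin 3) (Fin 3) F),
      (∀ M ∈ W, M ≠ 0 → IsUnit M) → Module.finrank F W ≤ 3) := by
  constructor
  · exact fun W hW => key W hW.ge
  · intro W hW
    by_contra h
    obtain ⟨M, hMW, hM0, hMdet⟩ := key W (by omega)
    have := (Matrix.isUnit_iff_isUnit_det M).1 (hW M hMW hM0)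
    rw [hMdet] at this
    exact (not_isUnit_zero : ¬ IsUnit (0 : F)) this
end

section
/- Let q be even and consider the 3-dimensional 𝔽_q-subspace W of symmetric 3×3 matrices consisting of all matrices M(x,y,z) = [[0, x, z], [x, z, y], [z, y, 0]] for x, y, z ∈ 𝔽_q. Then det M(x,y,z) = z³; consequently every nonzero element of W has rank ≥ 2, the elements of rank exactly 2 are precisely the nonzero elements with z = 0, and every element with z ≠ 0 has rank 3. -/
open Matrix

lemma aux_le {F : Type*} [Field F] (x y : F) :
    (!![0, x, 0; x, 0, y; 0, y, 0] : Matrix (Fin 3) (Fin 3) F).rank ≤ 2 := by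
  set B : Matrix (Fin 3) (Fin 3) F := !![0, x, 0; x, 0, y; 0, y, 0] with hB
  have key : ∀ v : Fin 3 → F, v ≠ 0 → B.mulVecLin v = 0 → B.rank ≤ 2 := by
    intro v hv0 hv
    have hk : (0:ℕ) < Module.finrank F (LinearMap.ker B.mulVecLin) := by
      rw [Module.finrank_pos_iff]
      refine nontrivial_of_ne ⟨v, hv⟩ 0 ?_
      intro h
      exact hv0 (congrArg Subtype.val h)
    have hrn := LinearMap.finrank_range_add_finrank_ker B.mulVecLin
    have : B.rank + Module.finrank F (LinearMap.ker B.mulVecLin) = 3 := by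
      rw [Matrix.rank, hrn]; simp
    omega
  by_cases hx : x = 0
  · refine key ![1, 0, 0] ?_ ?_
    · intro h; have := congrFun h 0; simp at this
    · ext i; fin_cases i <;> simp [hB, mulVecLin, mulVec, dotProduct, Fin.sum_univ_three, hx]
  · refine key ![y, 0, -x] ?_ ?_
    · intro h; have := congrFun h 2; simp at this; exact hx this
    · ext i; fin_cases i <;>
        simp [hB, mulVecLin, mulVec, dotProduct, Fin.sum_univ_three, mul_comm]

lemma rank_two_of_det_ne {F : Type*} [Field F] (a b c d : F) (h : a*d - b*c ≠ 0) :
    (!![a, b; c, d] : Matrix (Fin 2) (Fin 2) F).rank = 2 := by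
  have : IsUnit (!![a, b; c, d] : Matrix (Fin 2) (Fin 2) F) := by
    rw [Matrix.isUnit_iff_isUnit_det, Matrix.det_fin_two_of, isUnit_iff_ne_zero]
    exact h
  simpa using Matrix.rank_of_isUnit _ this

lemma aux_ge {F : Type*} [Field F] (x y : F) (h : ¬(x = 0 ∧ y = 0)) :
    2 ≤ (!![0, x, 0; x, 0, y; 0, y, 0] : Matrix (Fin 3) (Fin 3) F).rank := by
  set B : Matrix (Fin 3) (Fin 3) F := !![0, x, 0; x, 0, y; 0, y, 0] with hB
  have key : ∀ P : Matrix (Fin 2) (Fin 3) F, ∀ Q : Matrix (Fin 3) (Fin 2) F,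
      (P * (B * Q)).rank = 2 → 2 ≤ B.rank := by
    intro P Q hPQ
    calc 2 = (P * (B * Q)).rank := hPQ.symm
    _ ≤ (B * Q).rank := Matrix.rank_mul_le_right P (B * Q)
    _ ≤ B.rank := Matrix.rank_mul_le_left B Q
  by_cases hx : x = 0
  · have hy : y ≠ 0 := fun hy => h ⟨hx, hy⟩
    have heq : (!![0,1,0; 0,0,1] : Matrix (Fin 2) (Fin 3) F) *
        (B * (!![0,0; 1,0; 0,1] : Matrix (Fin 3) (Fin 2) F)) = !![0, y; y, 0] := by
      ext i j
      fin_cases i <;> fin_cases j <;>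
        simp [hB, Matrix.mul_apply, Fin.sum_univ_three, Fin.sum_univ_two]
    exact key _ _ (heq ▸ rank_two_of_det_ne 0 y y 0 (by simpa using mul_ne_zero hy hy))
  · have heq : (!![1,0,0; 0,1,0] : Matrix (Fin 2) (Fin 3) F) *
        (B * (!![1,0; 0,1; 0,0] : Matrix (Fin 3) (Fin 2) F)) = !![0, x; x, 0] := by
      ext i j
      fin_cases i <;> fin_cases j <;>
        simp [hB, Matrix.mul_apply, Fin.sum_univ_three, Fin.sum_univ_two]
    exact key _ _ (heq ▸ rank_two_of_det_ne 0 x x 0 (by simpa using mul_ne_zero hx hx))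

/-- For `q` even, the matrices `M(x,y,z) = !![0,x,z; x,z,y; z,y,0]` satisfy
`det M(x,y,z) = z³`; every nonzero such matrix has rank at least 2, the rank equals 2
precisely for the nonzero matrices with `z = 0`, and `z ≠ 0` gives rank 3. -/
theorem stmt10 {F : Type*} [Field F] [Fintype F] [CharP F 2] (x y z : F) :
    (!![0, x, z; x, z, y; z, y, 0] : Matrix (Fin 3) (Fin 3) F).det = z ^ 3 ∧
    (¬(x = 0 ∧ y = 0 ∧ z = 0) →
      2 ≤ (!![0, x, z; x, z, y; z, y, 0] : Matrix (Fin 3) (Fin 3) F).rank) ∧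
    ((!![0, x, z; x, z, y; z, y, 0] : Matrix (Fin 3) (Fin 3) F).rank = 2 ↔
      ¬(x = 0 ∧ y = 0 ∧ z = 0) ∧ z = 0) ∧
    (z ≠ 0 → (!![0, x, z; x, z, y; z, y, 0] : Matrix (Fin 3) (Fin 3) F).rank = 3) := by
  have h2 : (2 : F) = 0 := CharTwo.two_eq_zero
  have hdet : (!![0, x, z; x, z, y; z, y, 0] : Matrix (Fin 3) (Fin 3) F).det = z ^ 3 := by
    rw [Matrix.det_fin_three]
    norm_num
    simp
    linear_combination (x * y * z - z ^ 3) * h2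
  have h3 : z ≠ 0 → (!![0, x, z; x, z, y; z, y, 0] : Matrix (Fin 3) (Fin 3) F).rank = 3 := by
    intro hz
    have hu : IsUnit (!![0, x, z; x, z, y; z, y, 0] : Matrix (Fin 3) (Fin 3) F) := by
      rw [Matrix.isUnit_iff_isUnit_det, hdet, isUnit_iff_ne_zero]
      exact pow_ne_zero _ hz
    simpa using Matrix.rank_of_isUnit _ hu
  refine ⟨hdet, ?_, ?_, h3⟩
  · intro h
    by_cases hz : z = 0
    · subst hz
      exact aux_ge x y (by tauto)
    · rw [h3 hz]; omega
  · constructor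
    · intro hr
      have hz : z = 0 := by
        by_contra hz
        rw [h3 hz] at hr
        omega
      refine ⟨?_, hz⟩
      rintro ⟨hx, hy, _⟩
      subst hx; subst hy; subst hz
      have h0 : (!![0, (0:F), 0; 0, 0, 0; 0, 0, 0] : Matrix (Fin 3) (Fin 3) F) = 0 := by
        ext i j; fin_cases i <;> fin_cases j <;> simp [Matrix.vecHead, Matrix.vecTail]
      rw [h0, Matrix.rank_zero] at hr
      omega
    · rintro ⟨hne, hz⟩
      subst hz
      exact le_antisymm (aux_le x y) (aux_ge x y (by tauto))
end

section
/- Let W be a 2-dimensional 𝔽_q-subspace of the space of symmetric 3×3 matrices over 𝔽_q such that every nonzero element of W has rank ≥ 2. Then W is contained in a 3-dimensional subspace W' of symmetric 3×3 matrices all of whose nonzero elements have rank ≥ 2. -/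
open Matrix Module Submodule

section Aux

variable {F : Type*} [Field F]

/-- All 2×2 minors of a matrix of rank at most 1 vanish. -/
lemma aux_minors_vanish {N : Matrix (Fin 3) (Fin 3) F} (h : N.rank ≤ 1) (i j k l : Fin 3) :
    N i j * N k l = N i l * N k j := by
  by_contra hne
  have hdet : N i j * N k l - N i l * N k j ≠ 0 := fun h' => hne (sub_eq_zero.mp h')
  have hli : LinearIndependent F ![N i, N k] := by
    rw [LinearIndependent.pair_iff]
    intro s t hst
    have h1 : s * N i j + t * N k j = 0 := by simpa using congrFun hst j
    have h2 : s * N i l + t * N k l = 0 := by simpa using congrFun hst l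
    have hs : s * (N i j * N k l - N i l * N k j) = 0 := by
      linear_combination N k l * h1 - N k j * h2
    have ht : t * (N i j * N k l - N i l * N k j) = 0 := by
      linear_combination N i j * h2 - N i l * h1
    exact ⟨(mul_eq_zero.mp hs).resolve_right hdet, (mul_eq_zero.mp ht).resolve_right hdet⟩
  have hsub : Set.range ![N i, N k] ⊆ Set.range N := by
    rintro x ⟨c, rfl⟩
    fin_cases c
    · exact ⟨i, by simp⟩
    · exact ⟨k, by simp⟩
  have h2le : (2 : ℕ) ≤ N.rank := by
    have hfr : finrank F (span F (Set.range ![N i, N k])) = 2 := by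
      rw [finrank_span_eq_card hli]; simp
    have := Submodule.finrank_mono (R := F) (span_mono hsub)
    rw [hfr] at this
    rw [N.rank_eq_finrank_span_row]
    exact this
  omega

/-- Normalization predicate for vectors in `F³`. -/
def auxNormalized (v : Fin 3 → F) : Prop :=
  v 0 = 1 ∨ (v 0 = 0 ∧ v 1 = 1) ∨ (v 0 = 0 ∧ v 1 = 0 ∧ v 2 = 1)

lemma aux_normalize {v : Fin 3 → F} (hv : v ≠ 0) :
    ∃ t : F, t ≠ 0 ∧ auxNormalized (t • v) := by
  by_cases h0 : v 0 ≠ 0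
  · exact ⟨(v 0)⁻¹, inv_ne_zero h0, Or.inl (by simp [inv_mul_cancel₀ h0])⟩
  push_neg at h0
  by_cases h1 : v 1 ≠ 0
  · exact ⟨(v 1)⁻¹, inv_ne_zero h1, Or.inr (Or.inl ⟨by simp [h0], by simp [inv_mul_cancel₀ h1]⟩)⟩
  push_neg at h1
  have h2 : v 2 ≠ 0 := by
    intro h2
    apply hv
    funext i
    fin_cases i <;> simpa [h0, h1]
  exact ⟨(v 2)⁻¹, inv_ne_zero h2,
    Or.inr (Or.inr ⟨by simp [h0], by simp [h1], by simp [inv_mul_cancel₀ h2]⟩)⟩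

/-- A nonzero symmetric matrix of rank at most 1 is a scalar multiple of `v vᵀ` for a
normalized vector `v`. -/
lemma aux_rank_one_struct {N : Matrix (Fin 3) (Fin 3) F} (hs : N.IsSymm) (h0 : N ≠ 0)
    (hr : N.rank ≤ 1) :
    ∃ (c : F) (v : Fin 3 → F), auxNormalized v ∧ N = c • vecMulVec v v := by
  have hm := aux_minors_vanish hr
  have hsym : ∀ a b, N a b = N b a := fun a b => hs.apply b a
  have hdiag : ∃ j, N j j ≠ 0 := by
    by_contra hd
    push_neg at hd
    apply h0
    ext a b
    have h1 : N a b * N b a = N a a * N b b := hm a b b a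
    rw [hd a, hd b, mul_zero, ← hsym a b] at h1
    simpa using mul_self_eq_zero.mp h1
  obtain ⟨j₀, hj₀⟩ := hdiag
  set u : Fin 3 → F := fun k => N j₀ k with hu_def
  have hu : ∀ k l, N k l = (N j₀ j₀)⁻¹ * (u k * u l) := by
    intro k l
    have h1 : N k l * N j₀ j₀ = N k j₀ * N j₀ l := hm k l j₀ j₀
    have h2 : N k j₀ = N j₀ k := hsym k j₀
    field_simp [hu_def]
    linear_combination h1 + N j₀ l * h2
  have hune : u ≠ 0 := by
    intro h
    exact hj₀ (by simpa [hu_def] using congrFun h j₀)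
  obtain ⟨t, ht0, htn⟩ := aux_normalize hune
  refine ⟨(N j₀ j₀)⁻¹ * (t⁻¹ * t⁻¹), t • u, htn, ?_⟩
  ext a b
  rw [hu a b]
  simp only [Matrix.smul_apply, vecMulVec_apply, Pi.smul_apply, smul_eq_mul]
  field_simp

end Aux

section Sym6

variable {F : Type*} [Field F]

/-- An injective parametrization of symmetric `3×3` matrices by six coordinates. -/
def auxH (a : Fin 6 → F) : Matrix (Fin 3) (Fin 3) F :=
  Matrix.of ![![a 0, a 1, a 2], ![a 1, a 3, a 4], ![a 2, a 4, a 5]]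

lemma auxH_symm (a : Fin 6 → F) : (auxH a).IsSymm := by
  show (auxH a)ᵀ = auxH a
  ext i j
  fin_cases i <;> fin_cases j <;> simp [auxH]

lemma auxH_injective : Function.Injective (auxH (F := F)) := by
  intro a b hab
  funext i
  fin_cases i
  · simpa [auxH] using congrFun (congrFun hab 0) 0
  · simpa [auxH] using congrFun (congrFun hab 0) 1
  · simpa [auxH] using congrFun (congrFun hab 0) 2
  · simpa [auxH] using congrFun (congrFun hab 1) 1
  · simpa [auxH] using congrFun (congrFun hab 1) 2
  · simpa [auxH] using congrFun (congrFun hab 2) 2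

end Sym6

/-- Every 2-dimensional subspace of symmetric `3 × 3` matrices over `𝔽_q` all of whose
nonzero elements have rank at least 2 is contained in a 3-dimensional such subspace. -/
theorem stmt16 {F : Type*} [Field F] [Fintype F]
    (W : Submodule F (Matrix (Fin 3) (Fin 3) F))
    (hsymm : ∀ M ∈ W, M.IsSymm) (hdim : Module.finrank F W = 2)
    (hrank : ∀ M ∈ W, M ≠ 0 → 2 ≤ M.rank) :
    ∃ W' : Submodule F (Matrix (Fin 3) (Fin 3) F), W ≤ W' ∧
      (∀ M ∈ W', M.IsSymm) ∧ Module.finrank F W' = 3 ∧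
      ∀ M ∈ W', M ≠ 0 → 2 ≤ M.rank := by
  classical
  set Mat := Matrix (Fin 3) (Fin 3) F with hMat
  -- three parametrized families covering all "bad" matrices
  let gA : F × (F × F) × W → Mat := fun p =>
    p.1 • vecMulVec ![1, p.2.1.1, p.2.1.2] ![1, p.2.1.1, p.2.1.2] + (p.2.2 : Mat)
  let gB : F × F × W → Mat := fun p =>
    p.1 • vecMulVec ![0, 1, p.2.1] ![0, 1, p.2.1] + (p.2.2 : Mat)
  let gC : F × W → Mat := fun p =>
    p.1 • vecMulVec ![0, 0, 1] ![0, 0, 1] + (p.2 : Mat)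
  set S : Set Mat := Set.range gA ∪ Set.range gB ∪ Set.range gC with hS
  have key : ∀ (c : F) (v : Fin 3 → F) (w : W), auxNormalized v →
      c • vecMulVec v v + (w : Mat) ∈ S := by
    intro c v w hn
    rcases hn with h1 | ⟨h1, h2⟩ | ⟨h1, h2, h3⟩
    · have hv : ![1, v 1, v 2] = v := by
        funext i; fin_cases i <;> simp [h1]
      exact Or.inl (Or.inl ⟨(c, (v 1, v 2), w), by simp only [gA, hv]⟩)
    · have hv : ![0, 1, v 2] = v := by
        funext i; fin_cases i <;> simp [h1, h2]
      exact Or.inl (Or.inr ⟨(c, v 2, w), by simp only [gB, hv]⟩)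
    · have hv : ![0, 0, 1] = v := by
        funext i; fin_cases i <;> simp [h1, h2, h3]
      exact Or.inr ⟨(c, w), by simp only [gC, hv]⟩
  have hWS : ∀ w : Mat, w ∈ W → w ∈ S := by
    intro w hw
    exact Or.inr ⟨(0, ⟨w, hw⟩), by simp [gC]⟩
  -- counting: some symmetric matrix is not in S
  have hq2 : 2 ≤ Fintype.card F := Fintype.one_lt_card
  set q := Fintype.card F with hq
  haveI : Fintype W := Fintype.ofFinite W
  have hcardW : Fintype.card W = q ^ 2 := by
    rw [card_eq_pow_finrank (K := F) (V := W), hdim]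
  have hEx : ∃ a : Fin 6 → F, auxH a ∉ S := by
    by_contra hall
    push_neg at hall
    have hinj : Function.Injective (fun a : Fin 6 → F => (⟨auxH a, hall a⟩ : S)) := by
      intro a b hab
      exact auxH_injective (congrArg Subtype.val hab)
    have h1 : Nat.card (Fin 6 → F) ≤ Nat.card S :=
      Nat.card_le_card_of_injective _ hinj
    have hdom : Nat.card (Fin 6 → F) = q ^ 6 := by
      simp [Nat.card_eq_fintype_card, Fintype.card_fun, hq]
    have hA : Nat.card (Set.range gA) ≤ q ^ 5 := by
      refine le_trans (Finite.card_range_le gA) ?_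
      simp only [Nat.card_eq_fintype_card, Fintype.card_prod, hcardW, ← hq]
      ring_nf
      omega
    have hB : Nat.card (Set.range gB) ≤ q ^ 4 := by
      refine le_trans (Finite.card_range_le gB) ?_
      simp only [Nat.card_eq_fintype_card, Fintype.card_prod, hcardW, ← hq]
      ring_nf
      omega
    have hC : Nat.card (Set.range gC) ≤ q ^ 3 := by
      refine le_trans (Finite.card_range_le gC) ?_
      simp only [Nat.card_eq_fintype_card, Fintype.card_prod, hcardW, ← hq]
      ring_nf
      omega
    have hScard : Nat.card S ≤ q ^ 5 + q ^ 4 + q ^ 3 := by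
      have e1 : Nat.card S = S.ncard := Nat.card_coe_set_eq S
      have e2 : S.ncard ≤ (Set.range gA ∪ Set.range gB).ncard + (Set.range gC).ncard := by
        rw [hS]; exact Set.ncard_union_le _ _
      have e3 : (Set.range gA ∪ Set.range gB).ncard ≤
          (Set.range gA).ncard + (Set.range gB).ncard := Set.ncard_union_le _ _
      have e4 : (Set.range gA).ncard = Nat.card (Set.range gA) := (Nat.card_coe_set_eq _).symm
      have e5 : (Set.range gB).ncard = Nat.card (Set.range gB) := (Nat.card_coe_set_eq _).symm
      have e6 : (Set.range gC).ncard = Nat.card (Set.range gC) := (Nat.card_coe_set_eq _).symm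
      omega
    have hlt : q ^ 5 + q ^ 4 + q ^ 3 < q ^ 6 := by
      have h3 : q ^ 2 + q + 1 < q ^ 3 := by nlinarith
      have hq3 : 0 < q ^ 3 := by positivity
      calc q ^ 5 + q ^ 4 + q ^ 3 = q ^ 3 * (q ^ 2 + q + 1) := by ring
        _ < q ^ 3 * q ^ 3 := by exact (mul_lt_mul_iff_right₀ hq3).mpr h3
        _ = q ^ 6 := by ring
    omega
  obtain ⟨a, haS⟩ := hEx
  set M : Mat := auxH a with hMdef
  have hMW : M ∉ W := fun h => haS (hWS M h)
  have hM0 : M ≠ 0 := fun h => hMW (h ▸ W.zero_mem)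
  refine ⟨W ⊔ Submodule.span F {M}, le_sup_left, ?_, ?_, ?_⟩
  · -- symmetry
    intro x hx
    rcases Submodule.mem_sup.mp hx with ⟨w, hw, y, hy, rfl⟩
    rcases Submodule.mem_span_singleton.mp hy with ⟨t, rfl⟩
    exact (hsymm w hw).add ((auxH_symm a).smul t)
  · -- dimension
    have hspan : finrank F (Submodule.span F {M}) = 1 := finrank_span_singleton hM0
    have hinf : W ⊓ Submodule.span F {M} = ⊥ := by
      rw [eq_bot_iff]
      rintro x hx
      rcases Submodule.mem_inf.mp hx with ⟨hxW, hxs⟩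
      rcases Submodule.mem_span_singleton.mp hxs with ⟨t, rfl⟩
      rcases eq_or_ne t 0 with rfl | ht
      · simp
      · exfalso
        apply hMW
        have h' := W.smul_mem t⁻¹ hxW
        rwa [smul_smul, inv_mul_cancel₀ ht, one_smul] at h'
    have := Submodule.finrank_sup_add_finrank_inf_eq W (Submodule.span F {M})
    rw [hinf, finrank_bot, hdim, hspan] at this
    omega
  · -- rank condition
    intro x hx hx0
    by_contra hlt
    push_neg at hlt
    have hle : x.rank ≤ 1 := by omega
    have hxs : x.IsSymm := by
      rcases Submodule.mem_sup.mp hx with ⟨w, hw, y, hy, rfl⟩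
      rcases Submodule.mem_span_singleton.mp hy with ⟨t, rfl⟩
      exact (hsymm w hw).add ((auxH_symm a).smul t)
    obtain ⟨c, v, hn, heq⟩ := aux_rank_one_struct hxs hx0 hle
    rcases Submodule.mem_sup.mp hx with ⟨w, hw, y, hy, hxeq⟩
    rcases Submodule.mem_span_singleton.mp hy with ⟨t, rfl⟩
    rcases eq_or_ne t 0 with rfl | ht
    · have hxW : x ∈ W := by
        rw [← hxeq]
        simpa using hw
      exact absurd (hrank x hxW hx0) (by omega)
    · apply haS
      have hM : M = (t⁻¹ * c) • vecMulVec v v + ((-t⁻¹) • w) := by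
        have h1 : t • M = x - w := by rw [← hxeq]; abel
        calc M = t⁻¹ • (t • M) := by rw [smul_smul, inv_mul_cancel₀ ht, one_smul]
          _ = t⁻¹ • (x - w) := by rw [h1]
          _ = (t⁻¹ * c) • vecMulVec v v + ((-t⁻¹) • w) := by
              rw [heq, smul_sub, smul_smul, neg_smul, sub_eq_add_neg]
      rw [hM]
      exact key (t⁻¹ * c) v ⟨(-t⁻¹) • w, W.smul_mem _ hw⟩ hn
end
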